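/- Let 0 < α < 1 and ρ > 0, and set λ₀ = ρ/√(1−α). Then ψ_R″ and ψ_R‴ do not depend on R, ψ_R″ is an even function on ℝ whose zero set is exactly {−λ₀, λ₀}, and ψ_R‴(λ) = α(2−α)·λ·[(1−α)λ² − 3ρ²]·(λ² + ρ²)^{α/2 − 3} is an odd function on ℝ whose zero set is exactly {0, −√3·λ₀, √3·λ₀}. Moreover, there is a constant C > 0 depending only on α and ρ with |ψ_R″(λ)| ≤ C·(|λ|+1)^{−(2−α)} for all λ ∈ ℝ, and for every ε > 0 there is a constant c > 0, depending only on α, ρ and ε, such that |ψ_R″(λ)| ≥ c·(|λ|+1)^{−(2−α)} whenever ||λ| − λ₀| ≥ ε. -/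

import Mathlib

open Real

/-- The phase `ψ_R(λ) = (λ² + ρ²)^{α/2} − R·λ`. -/
noncomputable def psi (α ρ R lam : ℝ) : ℝ :=
  (lam ^ 2 + ρ ^ 2) ^ (α / 2) - R * lam

lemma pos_base (ρ lam : ℝ) (hρ : 0 < ρ) : 0 < lam ^ 2 + ρ ^ 2 := by positivity

lemma hbase (ρ lam : ℝ) : HasDerivAt (fun x : ℝ => x ^ 2 + ρ ^ 2) (2 * lam) lam := by
  simpa using (hasDerivAt_pow 2 lam).add_const (ρ ^ 2)

lemma hpow (ρ lam p : ℝ) (hρ : 0 < ρ) :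
    HasDerivAt (fun x : ℝ => (x ^ 2 + ρ ^ 2) ^ p)
      (2 * lam * p * (lam ^ 2 + ρ ^ 2) ^ (p - 1)) lam :=
  (hbase ρ lam).rpow_const (Or.inl (ne_of_gt (pos_base ρ lam hρ)))

lemma deriv1 (α ρ R : ℝ) (hρ : 0 < ρ) :
    deriv (psi α ρ R) = fun lam => α * lam * (lam ^ 2 + ρ ^ 2) ^ (α / 2 - 1) - R := by
  funext lam
  have h : HasDerivAt (psi α ρ R)
      (α * lam * (lam ^ 2 + ρ ^ 2) ^ (α / 2 - 1) - R) lam := by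
    have h1 := (hpow ρ lam (α / 2) hρ).sub ((hasDerivAt_id lam).const_mul R)
    refine h1.congr_deriv ?_
    simp only [id_eq, mul_one]
    ring
  exact h.deriv

lemma deriv2 (α ρ R : ℝ) (hρ : 0 < ρ) :
    deriv (fun lam => α * lam * (lam ^ 2 + ρ ^ 2) ^ (α / 2 - 1) - R)
      = fun lam => α * ((α - 1) * lam ^ 2 + ρ ^ 2) * (lam ^ 2 + ρ ^ 2) ^ (α / 2 - 2) := by
  funext lam
  have key : (lam ^ 2 + ρ ^ 2) ^ (α / 2 - 1)
      = (lam ^ 2 + ρ ^ 2) ^ (α / 2 - 2) * (lam ^ 2 + ρ ^ 2) := by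
    rw [show α / 2 - 1 = (α / 2 - 2) + 1 by ring, Real.rpow_add (pos_base ρ lam hρ),
      Real.rpow_one]
  have h : HasDerivAt (fun lam => α * lam * (lam ^ 2 + ρ ^ 2) ^ (α / 2 - 1) - R)
      (α * ((α - 1) * lam ^ 2 + ρ ^ 2) * (lam ^ 2 + ρ ^ 2) ^ (α / 2 - 2)) lam := by
    have h1 := (((hasDerivAt_id lam).const_mul α).mul (hpow ρ lam (α / 2 - 1) hρ)).sub_const R
    refine h1.congr_deriv ?_
    have h2 : α / 2 - 1 - 1 = α / 2 - 2 := by ring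
    simp only [id_eq, mul_one, h2]
    rw [key]
    ring
  exact h.deriv

lemma deriv3 (α ρ : ℝ) (hρ : 0 < ρ) :
    deriv (fun lam => α * ((α - 1) * lam ^ 2 + ρ ^ 2) * (lam ^ 2 + ρ ^ 2) ^ (α / 2 - 2))
      = fun lam => α * (2 - α) * lam * ((1 - α) * lam ^ 2 - 3 * ρ ^ 2)
          * (lam ^ 2 + ρ ^ 2) ^ (α / 2 - 3) := by
  funext lam
  have key : (lam ^ 2 + ρ ^ 2) ^ (α / 2 - 2)
      = (lam ^ 2 + ρ ^ 2) ^ (α / 2 - 3) * (lam ^ 2 + ρ ^ 2) := by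
    rw [show α / 2 - 2 = (α / 2 - 3) + 1 by ring, Real.rpow_add (pos_base ρ lam hρ),
      Real.rpow_one]
  have h : HasDerivAt (fun lam => α * ((α - 1) * lam ^ 2 + ρ ^ 2) * (lam ^ 2 + ρ ^ 2) ^ (α / 2 - 2))
      (α * (2 - α) * lam * ((1 - α) * lam ^ 2 - 3 * ρ ^ 2)
          * (lam ^ 2 + ρ ^ 2) ^ (α / 2 - 3)) lam := by
    have hpoly : HasDerivAt (fun x : ℝ => α * ((α - 1) * x ^ 2 + ρ ^ 2))
        (α * ((α - 1) * (2 * lam))) lam := by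
      have := (((hasDerivAt_pow 2 lam).const_mul (α - 1)).add_const (ρ ^ 2)).const_mul α
      refine this.congr_deriv ?_
      norm_num
    have h1 := hpoly.mul (hpow ρ lam (α / 2 - 2) hρ)
    refine h1.congr_deriv ?_
    have h2 : α / 2 - 2 - 1 = α / 2 - 3 := by ring
    simp only [id_eq, mul_one, h2]
    rw [key]
    ring
  exact h.deriv

lemma iter2 (α ρ R : ℝ) (hρ : 0 < ρ) :
    iteratedDeriv 2 (psi α ρ R)
      = fun lam => α * ((α - 1) * lam ^ 2 + ρ ^ 2) * (lam ^ 2 + ρ ^ 2) ^ (α / 2 - 2) := by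
  rw [show (2:ℕ) = 0 + 1 + 1 by rfl, iteratedDeriv_succ, iteratedDeriv_succ, iteratedDeriv_zero,
    deriv1 α ρ R hρ, deriv2 α ρ R hρ]

lemma iter3 (α ρ R : ℝ) (hρ : 0 < ρ) :
    iteratedDeriv 3 (psi α ρ R)
      = fun lam => α * (2 - α) * lam * ((1 - α) * lam ^ 2 - 3 * ρ ^ 2)
          * (lam ^ 2 + ρ ^ 2) ^ (α / 2 - 3) := by
  rw [show (3:ℕ) = 2 + 1 by rfl, iteratedDeriv_succ, iter2 α ρ R hρ, deriv3 α ρ hρ]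

lemma sqpow (x p : ℝ) (hx : 0 ≤ x) : (x ^ 2) ^ p = x ^ (2 * p) := by
  rw [← Real.rpow_natCast x 2, ← Real.rpow_mul hx]
  norm_num

lemma rpow_shift (ρ lam p : ℝ) (hρ : 0 < ρ) :
    (lam ^ 2 + ρ ^ 2) ^ (p + 1) = (lam ^ 2 + ρ ^ 2) ^ p * (lam ^ 2 + ρ ^ 2) := by
  rw [Real.rpow_add (pos_base ρ lam hρ), Real.rpow_one]

lemma highbound (ρ M lam : ℝ) (h1 : 1 ≤ M) (h2 : ρ ^ 2 ≤ M) :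
    lam ^ 2 + ρ ^ 2 ≤ M * (|lam| + 1) ^ 2 := by
  nlinarith [sq_abs lam, abs_nonneg lam,
    mul_nonneg (by linarith : (0:ℝ) ≤ M - 1) (sq_nonneg lam),
    mul_nonneg (by linarith : (0:ℝ) ≤ M) (abs_nonneg lam)]

lemma lowbound (ρ m lam : ℝ) (hm : 0 < m) (h1 : m ≤ 1 / 2) (h2 : m ≤ ρ ^ 2 / 2) :
    m * (|lam| + 1) ^ 2 ≤ lam ^ 2 + ρ ^ 2 := by
  nlinarith [sq_abs lam, mul_nonneg hm.le (sq_nonneg (|lam| - 1)),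
    mul_le_mul_of_nonneg_right h1 (sq_nonneg lam)]

lemma absbound (α ρ lam lam0 : ℝ) (hα0 : 0 < α) (h1α : 0 < 1 - α)
    (hlam0sq : (1 - α) * lam0 ^ 2 = ρ ^ 2) (hcase : 2 * lam0 ^ 2 ≤ lam ^ 2) :
    (1 - α) / 3 * (lam ^ 2 + ρ ^ 2) ≤ |(α - 1) * lam ^ 2 + ρ ^ 2| := by
  have hρlt' : 2 * ρ ^ 2 ≤ (1 - α) * lam ^ 2 := by
    nlinarith [mul_le_mul_of_nonneg_left hcase h1α.le]
  have key : (α - 1) * lam ^ 2 + ρ ^ 2 ≤ 0 := by nlinarith [sq_nonneg ρ]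
  rw [abs_of_nonpos key]
  nlinarith [mul_nonneg hα0.le (sq_nonneg ρ), sq_nonneg ρ]

theorem stmt7 (α ρ : ℝ) (hα0 : 0 < α) (hα1 : α < 1) (hρ : 0 < ρ)
    (lam0 : ℝ) (hlam0 : lam0 = ρ / Real.sqrt (1 - α)) :
    -- ψ_R″ and ψ_R‴ do not depend on R
    (∀ R R' : ℝ, iteratedDeriv 2 (psi α ρ R) = iteratedDeriv 2 (psi α ρ R') ∧
      iteratedDeriv 3 (psi α ρ R) = iteratedDeriv 3 (psi α ρ R')) ∧
    -- ψ_R″ is even with zero set exactly {−λ₀, λ₀}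
    (∀ R lam : ℝ, iteratedDeriv 2 (psi α ρ R) (-lam) = iteratedDeriv 2 (psi α ρ R) lam) ∧
    (∀ R lam : ℝ, iteratedDeriv 2 (psi α ρ R) lam = 0 ↔ lam = lam0 ∨ lam = -lam0) ∧
    -- explicit formula for ψ_R‴
    (∀ R lam : ℝ, iteratedDeriv 3 (psi α ρ R) lam
      = α * (2 - α) * lam * ((1 - α) * lam ^ 2 - 3 * ρ ^ 2)
          * (lam ^ 2 + ρ ^ 2) ^ (α / 2 - 3)) ∧
    -- ψ_R‴ is odd with zero set exactly {0, −√3·λ₀, √3·λ₀}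
    (∀ R lam : ℝ, iteratedDeriv 3 (psi α ρ R) (-lam) = - iteratedDeriv 3 (psi α ρ R) lam) ∧
    (∀ R lam : ℝ, iteratedDeriv 3 (psi α ρ R) lam = 0 ↔
      lam = 0 ∨ lam = Real.sqrt 3 * lam0 ∨ lam = -(Real.sqrt 3 * lam0)) ∧
    -- upper bound for |ψ_R″|
    (∃ C : ℝ, 0 < C ∧ ∀ R lam : ℝ,
      |iteratedDeriv 2 (psi α ρ R) lam| ≤ C * (|lam| + 1) ^ (-(2 - α))) ∧
    -- lower bound for |ψ_R″| away from ±λ₀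
    (∀ ε : ℝ, 0 < ε → ∃ c : ℝ, 0 < c ∧ ∀ R lam : ℝ, ε ≤ |(|lam| - lam0)| →
      c * (|lam| + 1) ^ (-(2 - α)) ≤ |iteratedDeriv 2 (psi α ρ R) lam|) := by
  have h1α : (0:ℝ) < 1 - α := by linarith
  have hs : Real.sqrt (1 - α) > 0 := Real.sqrt_pos.mpr h1α
  have hlam0pos : 0 < lam0 := by rw [hlam0]; positivity
  have hlam0sq : (1 - α) * lam0 ^ 2 = ρ ^ 2 := by
    rw [hlam0, div_pow, Real.sq_sqrt h1α.le]
    field_simp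
  refine ⟨?_, ?_, ?_, ?_, ?_, ?_, ?_, ?_⟩
  · intro R R'
    rw [iter2 α ρ R hρ, iter2 α ρ R' hρ, iter3 α ρ R hρ, iter3 α ρ R' hρ]
    exact ⟨rfl, rfl⟩
  · intro R lam
    simp only [iter2 α ρ R hρ, neg_sq]
  · intro R lam
    rw [iter2 α ρ R hρ]
    simp only
    have hX : (lam ^ 2 + ρ ^ 2) ^ (α / 2 - 2) ≠ 0 :=
      ne_of_gt (Real.rpow_pos_of_pos (pos_base ρ lam hρ) _)
    rw [mul_eq_zero, mul_eq_zero]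
    constructor
    · rintro ((h | h) | h)
      · exact absurd h (ne_of_gt hα0)
      · have h13 : (1 - α) * lam ^ 2 = (1 - α) * lam0 ^ 2 := by
          linear_combination -h - hlam0sq
        have : lam ^ 2 = lam0 ^ 2 := mul_left_cancel₀ (ne_of_gt h1α) h13
        rcases sq_eq_sq_iff_eq_or_eq_neg.mp this with h' | h'
        · exact Or.inl h'
        · exact Or.inr h'
      · exact absurd h hX
    · rintro (h | h) <;> subst h
      · left; right; linear_combination -hlam0sq
      · left; right; linear_combination -hlam0sq
  · intro R lam
    rw [iter3 α ρ R hρ]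
  · intro R lam
    simp only [iter3 α ρ R hρ, neg_sq]
    ring
  · intro R lam
    rw [iter3 α ρ R hρ]
    simp only
    have hX : (lam ^ 2 + ρ ^ 2) ^ (α / 2 - 3) ≠ 0 :=
      ne_of_gt (Real.rpow_pos_of_pos (pos_base ρ lam hρ) _)
    have h3 : (Real.sqrt 3 * lam0) ^ 2 = 3 * lam0 ^ 2 := by
      rw [mul_pow, Real.sq_sqrt (by norm_num : (3:ℝ) ≥ 0)]
    rw [mul_eq_zero, mul_eq_zero, mul_eq_zero, mul_eq_zero]
    constructor
    · rintro ((((h | h) | h) | h) | h)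
      · exact absurd h (ne_of_gt hα0)
      · exact absurd h (by linarith)
      · exact Or.inl h
      · right
        have h13 : (1 - α) * lam ^ 2 = (1 - α) * ((Real.sqrt 3 * lam0) ^ 2) := by
          linear_combination h - 3 * hlam0sq - (1 - α) * h3
        have : lam ^ 2 = (Real.sqrt 3 * lam0) ^ 2 :=
          mul_left_cancel₀ (ne_of_gt h1α) h13
        exact sq_eq_sq_iff_eq_or_eq_neg.mp this
      · exact absurd h hX
    · rintro (h | h | h) <;> subst h
      · left; left; right; rfl
      · left; right
        linear_combination 3 * hlam0sq + (1 - α) * h3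
      · left; right
        have h3' : (-(Real.sqrt 3 * lam0)) ^ 2 = 3 * lam0 ^ 2 := by rw [neg_sq]; exact h3
        linear_combination 3 * hlam0sq + (1 - α) * h3'
  · -- upper bound
    set m : ℝ := min 1 (ρ ^ 2) / 2 with hm
    have hmpos : 0 < m := by
      have := hρ; positivity
    refine ⟨α * m ^ (α / 2 - 1), by positivity, ?_⟩
    intro R lam
    rw [iter2 α ρ R hρ]
    simp only
    have hpos := pos_base ρ lam hρ
    have hXpos : (0:ℝ) < (lam ^ 2 + ρ ^ 2) ^ (α / 2 - 2) := Real.rpow_pos_of_pos hpos _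
    rw [abs_mul, abs_mul, abs_of_pos hα0, abs_of_pos hXpos]
    have habs : |(α - 1) * lam ^ 2 + ρ ^ 2| ≤ lam ^ 2 + ρ ^ 2 := by
      rw [abs_le]
      constructor <;> nlinarith [sq_nonneg lam]
    have step1 : α * |(α - 1) * lam ^ 2 + ρ ^ 2| * (lam ^ 2 + ρ ^ 2) ^ (α / 2 - 2)
        ≤ α * (lam ^ 2 + ρ ^ 2) ^ (α / 2 - 1) := by
      have : (lam ^ 2 + ρ ^ 2) ^ (α / 2 - 1)
          = (lam ^ 2 + ρ ^ 2) ^ (α / 2 - 2) * (lam ^ 2 + ρ ^ 2) := by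
        rw [show α / 2 - 1 = (α / 2 - 2) + 1 by ring, rpow_shift ρ lam _ hρ]
      rw [this]
      calc α * |(α - 1) * lam ^ 2 + ρ ^ 2| * (lam ^ 2 + ρ ^ 2) ^ (α / 2 - 2)
          ≤ α * (lam ^ 2 + ρ ^ 2) * (lam ^ 2 + ρ ^ 2) ^ (α / 2 - 2) := by
            apply mul_le_mul_of_nonneg_right _ hXpos.le
            exact mul_le_mul_of_nonneg_left habs hα0.le
        _ = α * ((lam ^ 2 + ρ ^ 2) ^ (α / 2 - 2) * (lam ^ 2 + ρ ^ 2)) := by ring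
    refine step1.trans ?_
    have hlow : m * (|lam| + 1) ^ 2 ≤ lam ^ 2 + ρ ^ 2 := by
      refine lowbound ρ m lam hmpos ?_ ?_
      · rw [hm]; have : min 1 (ρ^2) ≤ 1 := min_le_left _ _; linarith
      · rw [hm]; have : min 1 (ρ^2) ≤ ρ^2 := min_le_right _ _; linarith
    have hmono : (lam ^ 2 + ρ ^ 2) ^ (α / 2 - 1) ≤ (m * (|lam| + 1) ^ 2) ^ (α / 2 - 1) := by
      apply Real.rpow_le_rpow_of_nonpos (by positivity) hlow (by linarith)
    have heq : (m * (|lam| + 1) ^ 2) ^ (α / 2 - 1)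
        = m ^ (α / 2 - 1) * (|lam| + 1) ^ (-(2 - α)) := by
      rw [Real.mul_rpow hmpos.le (by positivity), sqpow (|lam| + 1) _ (by positivity)]
      ring_nf
    calc α * (lam ^ 2 + ρ ^ 2) ^ (α / 2 - 1)
        ≤ α * (m * (|lam| + 1) ^ 2) ^ (α / 2 - 1) :=
          mul_le_mul_of_nonneg_left hmono hα0.le
      _ = α * m ^ (α / 2 - 1) * (|lam| + 1) ^ (-(2 - α)) := by rw [heq]; ring
  · -- lower bound
    intro ε hε
    set M : ℝ := max 1 (ρ ^ 2) with hM
    have hMpos : (0:ℝ) < M := lt_of_lt_of_le one_pos (le_max_left _ _)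
    set cA : ℝ := α * (1 - α) / 3 * M ^ (α / 2 - 1) with hcA
    set cB : ℝ := α * (1 - α) * ε * lam0 * (2 * lam0 ^ 2 + ρ ^ 2) ^ (α / 2 - 2) with hcB
    have hcApos : 0 < cA := by
      rw [hcA]
      have : (0:ℝ) < M ^ (α / 2 - 1) := Real.rpow_pos_of_pos hMpos _
      positivity
    have hcBpos : 0 < cB := by
      rw [hcB]
      have h2 : (0:ℝ) < 2 * lam0 ^ 2 + ρ ^ 2 := by positivity
      have : (0:ℝ) < (2 * lam0 ^ 2 + ρ ^ 2) ^ (α / 2 - 2) := Real.rpow_pos_of_pos h2 _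
      positivity
    refine ⟨min cA cB, lt_min hcApos hcBpos, ?_⟩
    intro R lam hlam
    rw [iter2 α ρ R hρ]
    simp only
    have hpos := pos_base ρ lam hρ
    have hXpos : (0:ℝ) < (lam ^ 2 + ρ ^ 2) ^ (α / 2 - 2) := Real.rpow_pos_of_pos hpos _
    rw [abs_mul, abs_mul, abs_of_pos hα0, abs_of_pos hXpos]
    have hpow1 : (0:ℝ) < (|lam| + 1) ^ (-(2 - α)) := Real.rpow_pos_of_pos (by positivity) _
    rcases le_or_gt (lam ^ 2) (2 * lam0 ^ 2) with hcase | hcase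
    · -- case B : bounded region
      have hple1 : (|lam| + 1) ^ (-(2 - α)) ≤ 1 :=
        Real.rpow_le_one_of_one_le_of_nonpos (by have := abs_nonneg lam; linarith) (by linarith)
      have habs : (1 - α) * ε * lam0 ≤ |(α - 1) * lam ^ 2 + ρ ^ 2| := by
        have key : (α - 1) * lam ^ 2 + ρ ^ 2
            = (1 - α) * ((lam0 - |lam|) * (lam0 + |lam|)) := by
          linear_combination (-1 : ℝ) * hlam0sq + (1 - α) * sq_abs lam
        rw [key, abs_mul, abs_of_pos h1α, abs_mul]
        have h1 : ε ≤ abs (lam0 - |lam|) := by rwa [abs_sub_comm]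
        have h2 : lam0 ≤ abs (lam0 + |lam|) := by
          have hpos' : (0:ℝ) < lam0 + |lam| := by
            have := abs_nonneg lam; linarith
          rw [abs_of_pos hpos']
          have := abs_nonneg lam; linarith
        calc (1 - α) * ε * lam0 = (1 - α) * (ε * lam0) := by ring
          _ ≤ (1 - α) * (abs (lam0 - |lam|) * abs (lam0 + |lam|)) :=
              mul_le_mul_of_nonneg_left
                (mul_le_mul h1 h2 hlam0pos.le (abs_nonneg _)) h1α.le
      have hXge : (2 * lam0 ^ 2 + ρ ^ 2) ^ (α / 2 - 2) ≤ (lam ^ 2 + ρ ^ 2) ^ (α / 2 - 2) :=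
        Real.rpow_le_rpow_of_nonpos hpos (by linarith) (by linarith)
      have hbig : cB ≤ α * |(α - 1) * lam ^ 2 + ρ ^ 2| * (lam ^ 2 + ρ ^ 2) ^ (α / 2 - 2) := by
        rw [hcB]
        calc α * (1 - α) * ε * lam0 * (2 * lam0 ^ 2 + ρ ^ 2) ^ (α / 2 - 2)
            ≤ α * (1 - α) * ε * lam0 * (lam ^ 2 + ρ ^ 2) ^ (α / 2 - 2) := by
              exact mul_le_mul_of_nonneg_left hXge
                (mul_nonneg (mul_nonneg (mul_nonneg hα0.le h1α.le) hε.le) hlam0pos.le)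
          _ ≤ α * |(α - 1) * lam ^ 2 + ρ ^ 2| * (lam ^ 2 + ρ ^ 2) ^ (α / 2 - 2) := by
              apply mul_le_mul_of_nonneg_right _ hXpos.le
              calc α * (1 - α) * ε * lam0 = α * ((1 - α) * ε * lam0) := by ring
                _ ≤ α * |(α - 1) * lam ^ 2 + ρ ^ 2| :=
                    mul_le_mul_of_nonneg_left habs hα0.le
      calc min cA cB * (|lam| + 1) ^ (-(2 - α)) ≤ cB * 1 := by
            apply mul_le_mul (min_le_right _ _) hple1 hpow1.le hcBpos.le
        _ = cB := mul_one _
        _ ≤ _ := hbig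
    · -- case A : large |lam|
      have habs : (1 - α) / 3 * (lam ^ 2 + ρ ^ 2) ≤ |(α - 1) * lam ^ 2 + ρ ^ 2| :=
        absbound α ρ lam lam0 hα0 h1α hlam0sq hcase.le
      have hhigh : lam ^ 2 + ρ ^ 2 ≤ M * (|lam| + 1) ^ 2 :=
        highbound ρ M lam (le_max_left _ _) (le_max_right _ _)
      have hmono : (M * (|lam| + 1) ^ 2) ^ (α / 2 - 1) ≤ (lam ^ 2 + ρ ^ 2) ^ (α / 2 - 1) :=
        Real.rpow_le_rpow_of_nonpos hpos hhigh (by linarith)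
      have heq : (M * (|lam| + 1) ^ 2) ^ (α / 2 - 1)
          = M ^ (α / 2 - 1) * (|lam| + 1) ^ (-(2 - α)) := by
        rw [Real.mul_rpow hMpos.le (by positivity), sqpow (|lam| + 1) _ (by positivity)]
        ring_nf
      have hshift : (lam ^ 2 + ρ ^ 2) ^ (α / 2 - 1)
          = (lam ^ 2 + ρ ^ 2) ^ (α / 2 - 2) * (lam ^ 2 + ρ ^ 2) := by
        rw [show α / 2 - 1 = (α / 2 - 2) + 1 by ring, rpow_shift ρ lam _ hρ]
      calc min cA cB * (|lam| + 1) ^ (-(2 - α))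
          ≤ cA * (|lam| + 1) ^ (-(2 - α)) :=
            mul_le_mul_of_nonneg_right (min_le_left _ _) hpow1.le
        _ = α * (1 - α) / 3 * (M ^ (α / 2 - 1) * (|lam| + 1) ^ (-(2 - α))) := by
            rw [hcA]; ring
        _ = α * (1 - α) / 3 * (M * (|lam| + 1) ^ 2) ^ (α / 2 - 1) := by rw [heq]
        _ ≤ α * (1 - α) / 3 * (lam ^ 2 + ρ ^ 2) ^ (α / 2 - 1) := by
            apply mul_le_mul_of_nonneg_left hmono
            have : (0:ℝ) ≤ α * (1 - α) := mul_nonneg hα0.le h1α.le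
            linarith
        _ = α * ((1 - α) / 3 * (lam ^ 2 + ρ ^ 2)) * (lam ^ 2 + ρ ^ 2) ^ (α / 2 - 2) := by
            rw [hshift]; ring
        _ ≤ α * |(α - 1) * lam ^ 2 + ρ ^ 2| * (lam ^ 2 + ρ ^ 2) ^ (α / 2 - 2) := by
            apply mul_le_mul_of_nonneg_right _ hXpos.le
            exact mul_le_mul_of_nonneg_left habs hα0.le
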